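/- For every t>0 and S>0, the delta of the Black–Scholes formula is ∂_S 𝓑𝓢(t,S) = α e^{−(r−r_R)t} Φ(αζ₁), where ∂_S denotes the derivative with respect to the asset variable S. -/

import Mathlib

/-- Standard normal cumulative distribution function. -/
noncomputable def Phi (x : ℝ) : ℝ :=
  (Real.sqrt (2 * Real.pi))⁻¹ * ∫ u in Set.Iic x, Real.exp (-u ^ 2 / 2)

/-- `ζ₁ = (log(S/K) + (r_R + σ²/2)t)/(σ√t)`. -/
noncomputable def zeta1 (σ K r_R t S : ℝ) : ℝ :=
  (Real.log (S / K) + (r_R + σ ^ 2 / 2) * t) / (σ * Real.sqrt t)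

/-- `ζ₂ = ζ₁ − σ√t`. -/
noncomputable def zeta2 (σ K r_R t S : ℝ) : ℝ :=
  zeta1 σ K r_R t S - σ * Real.sqrt t

/-- The Black–Scholes formula
`𝓑𝓢(t,S) = α S e^{−(r−r_R)t} Φ(αζ₁) − α K e^{−rt} Φ(αζ₂)` (t = time to maturity). -/
noncomputable def BS (σ K r r_R α t S : ℝ) : ℝ :=
  α * S * Real.exp (-(r - r_R) * t) * Phi (α * zeta1 σ K r_R t S)
    - α * K * Real.exp (-r * t) * Phi (α * zeta2 σ K r_R t S)

section Aux
open MeasureTheory intervalIntegral Real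

lemma gauss_integrable : Integrable (fun u : ℝ => Real.exp (-u ^ 2 / 2)) := by
  have := integrable_exp_neg_mul_sq (b := (1:ℝ)/2) (by norm_num)
  convert this using 2 with u
  ring_nf

lemma gauss_cont : Continuous (fun u : ℝ => Real.exp (-u ^ 2 / 2)) := by
  continuity

lemma hasDerivAt_Phi (x : ℝ) :
    HasDerivAt Phi ((Real.sqrt (2 * Real.pi))⁻¹ * Real.exp (-x ^ 2 / 2)) x := by
  have hInt := gauss_integrable
  have heq : ∀ y : ℝ, Phi y = (Real.sqrt (2 * Real.pi))⁻¹ *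
      ((∫ u in Set.Iic (0:ℝ), Real.exp (-u ^ 2 / 2)) +
        ∫ u in (0:ℝ)..y, Real.exp (-u ^ 2 / 2)) := by
    intro y
    unfold Phi
    congr 1
    rw [← integral_Iic_sub_Iic hInt.integrableOn hInt.integrableOn]
    ring
  have hd : HasDerivAt (fun y => ∫ u in (0:ℝ)..y, Real.exp (-u ^ 2 / 2))
      (Real.exp (-x ^ 2 / 2)) x :=
    integral_hasDerivAt_right hInt.intervalIntegrable
      (gauss_cont.aestronglyMeasurable.stronglyMeasurableAtFilter)
      gauss_cont.continuousAt
  have := ((hd.const_add (∫ u in Set.Iic (0:ℝ), Real.exp (-u ^ 2 / 2))).const_mul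
      (Real.sqrt (2 * Real.pi))⁻¹)
  refine HasDerivAt.congr_of_eventuallyEq this ?_
  filter_upwards with y using (heq y)

lemma key_exp (σ K r_R t S : ℝ) (hσ : 0 < σ) (hK : 0 < K) (ht : 0 < t) (hS : 0 < S) :
    Real.exp (-(zeta2 σ K r_R t S) ^ 2 / 2)
      = (S / K) * Real.exp (r_R * t) * Real.exp (-(zeta1 σ K r_R t S) ^ 2 / 2) := by
  have hst : σ * Real.sqrt t ≠ 0 :=
    (mul_pos hσ (Real.sqrt_pos.mpr ht)).ne'
  have h1 : σ * Real.sqrt t * zeta1 σ K r_R t S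
      = Real.log (S / K) + (r_R + σ ^ 2 / 2) * t := by
    unfold zeta1; field_simp
  have hb : (σ * Real.sqrt t) ^ 2 = σ ^ 2 * t := by
    rw [mul_pow, Real.sq_sqrt ht.le]
  rw [← Real.exp_log (div_pos hS hK), ← Real.exp_add, ← Real.exp_add]
  congr 1
  unfold zeta2
  nlinarith [h1, hb]

/-- The delta of the Black–Scholes formula:
`∂_S 𝓑𝓢(t,S) = α e^{−(r−r_R)t} Φ(αζ₁)`. -/
theorem BS_delta
    (σ K r r_R α : ℝ) (hσ : 0 < σ) (hK : 0 < K) (hα : α = 1 ∨ α = -1) :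
    ∀ t > (0 : ℝ), ∀ S > (0 : ℝ),
      deriv (fun s => BS σ K r r_R α t s) S
        = α * Real.exp (-(r - r_R) * t) * Phi (α * zeta1 σ K r_R t S) := by
  intro t ht S hS
  have hst : (0:ℝ) < σ * Real.sqrt t := mul_pos hσ (Real.sqrt_pos.mpr ht)
  set d : ℝ := S⁻¹ / (σ * Real.sqrt t) with hd
  -- derivative of zeta1 in S
  have hlog : HasDerivAt (fun s => Real.log (s / K)) S⁻¹ S := by
    have h1 : HasDerivAt (fun s : ℝ => s / K) (1 / K) S := by
      simpa using (hasDerivAt_id S).div_const K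
    have h2 := (Real.hasDerivAt_log (div_pos hS hK).ne').comp S h1
    convert h2 using 1
    · rfl
    · rfl
    · rfl
    rw [one_div, ← mul_inv, div_mul_cancel₀ S hK.ne']
  have hz1 : HasDerivAt (fun s => zeta1 σ K r_R t s) d S := by
    unfold zeta1
    exact (hlog.add_const _).div_const _
  have hz2 : HasDerivAt (fun s => zeta2 σ K r_R t s) d S := by
    unfold zeta2
    exact hz1.sub_const _
  set c : ℝ := (Real.sqrt (2 * Real.pi))⁻¹ with hc
  have hP1 : HasDerivAt (fun s => Phi (α * zeta1 σ K r_R t s))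
      (c * Real.exp (-(α * zeta1 σ K r_R t S) ^ 2 / 2) * (α * d)) S :=
    (hasDerivAt_Phi _).comp S (hz1.const_mul α)
  have hP2 : HasDerivAt (fun s => Phi (α * zeta2 σ K r_R t s))
      (c * Real.exp (-(α * zeta2 σ K r_R t S) ^ 2 / 2) * (α * d)) S :=
    (hasDerivAt_Phi _).comp S (hz2.const_mul α)
  have h1 : HasDerivAt (fun s => α * s * Real.exp (-(r - r_R) * t) * Phi (α * zeta1 σ K r_R t s))
      (α * Real.exp (-(r - r_R) * t) * Phi (α * zeta1 σ K r_R t S)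
        + α * S * Real.exp (-(r - r_R) * t)
            * (c * Real.exp (-(α * zeta1 σ K r_R t S) ^ 2 / 2) * (α * d))) S := by
    have hlin : HasDerivAt (fun s : ℝ => α * s * Real.exp (-(r - r_R) * t))
        (α * Real.exp (-(r - r_R) * t)) S := by
      simpa using (((hasDerivAt_id S).const_mul α).mul_const (Real.exp (-(r - r_R) * t)))
    exact hlin.mul hP1
  have h2 : HasDerivAt (fun s => α * K * Real.exp (-r * t) * Phi (α * zeta2 σ K r_R t s))
      (α * K * Real.exp (-r * t)
        * (c * Real.exp (-(α * zeta2 σ K r_R t S) ^ 2 / 2) * (α * d))) S :=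
    hP2.const_mul _
  have hBS : HasDerivAt (fun s => BS σ K r r_R α t s)
      (α * Real.exp (-(r - r_R) * t) * Phi (α * zeta1 σ K r_R t S)
        + α * S * Real.exp (-(r - r_R) * t)
            * (c * Real.exp (-(α * zeta1 σ K r_R t S) ^ 2 / 2) * (α * d))
        - α * K * Real.exp (-r * t)
            * (c * Real.exp (-(α * zeta2 σ K r_R t S) ^ 2 / 2) * (α * d))) S := by
    unfold BS
    exact h1.sub h2
  rw [hBS.deriv]
  have hα2 : α ^ 2 = 1 := by rcases hα with h | h <;> simp [h]
  have hsq1 : (α * zeta1 σ K r_R t S) ^ 2 = (zeta1 σ K r_R t S) ^ 2 := by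
    rw [mul_pow, hα2, one_mul]
  have hsq2 : (α * zeta2 σ K r_R t S) ^ 2 = (zeta2 σ K r_R t S) ^ 2 := by
    rw [mul_pow, hα2, one_mul]
  rw [hsq1, hsq2, key_exp σ K r_R t S hσ hK ht hS]
  have hcancel : S * Real.exp (-(r - r_R) * t) * Real.exp (-(zeta1 σ K r_R t S) ^ 2 / 2)
      = K * Real.exp (-r * t) * ((S / K) * Real.exp (r_R * t)
          * Real.exp (-(zeta1 σ K r_R t S) ^ 2 / 2)) := by
    rw [neg_mul, Real.exp_neg, sub_mul, Real.exp_sub, neg_mul, Real.exp_neg]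
    field_simp
  linear_combination (α * α * d * c) * hcancel

end Aux
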